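/- For any odd integer n ≥ 3, the equidistant dimension of the prism graph C_n □ K_2 equals n. -/

import Mathlib

open SimpleGraph
open Fin.NatCast Fin.CommRing

/-- A distance-equalizer set: any two vertices outside `D` are equidistant
from some vertex of `D`. -/
def IsDistEqSet {V : Type*} (G : SimpleGraph V) (D : Set V) : Prop :=
  ∀ x ∉ D, ∀ y ∉ D, ∃ w ∈ D, G.dist x w = G.dist y w

/-- The equidistant dimension: minimum cardinality of a distance-equalizer set. -/
noncomputable def eqdim {V : Type*} [Fintype V] (G : SimpleGraph V) : ℕ :=
  sInf {k | ∃ D : Finset V, IsDistEqSet G (D : Set V) ∧ D.card = k}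

lemma fin_one_val (n : ℕ) [NeZero n] (hn : 2 ≤ n) : ((1 : Fin n)).val = 1 := by
  rw [← Nat.cast_one, Fin.val_natCast]; exact Nat.mod_eq_of_lt (by omega)

lemma cyc_walk (n : ℕ) [NeZero n] (hn : 2 ≤ n) (u : Fin n) (k : ℕ) :
    ∃ w : (cycleGraph n).Walk u (u + (k : Fin n)), w.length = k := by
  induction k with
  | zero =>
    refine ⟨Walk.nil.copy rfl (by simp), by simp⟩
  | succ k ih =>
    obtain ⟨w, hw⟩ := ih
    have hadj : (cycleGraph n).Adj (u + (k : Fin n)) (u + ((k+1 : ℕ) : Fin n)) := by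
      rw [cycleGraph_adj']
      right
      have h1 : (u + ((k+1 : ℕ) : Fin n)) - (u + (k : Fin n)) = 1 := by push_cast; ring
      rw [h1, fin_one_val n hn]
    exact ⟨w.concat hadj, by simp [hw]⟩

lemma cyc_dist_le (n : ℕ) [NeZero n] (hn : 2 ≤ n) (u v : Fin n) :
    (cycleGraph n).dist u v ≤ min (v - u).val (u - v).val := by
  have h1 : (cycleGraph n).dist u v ≤ (v - u).val := by
    obtain ⟨w, hw⟩ := cyc_walk n hn u (v - u).val
    have : u + (((v - u).val : ℕ) : Fin n) = v := by
      rw [Fin.cast_val_eq_self]; ring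
    calc (cycleGraph n).dist u v ≤ (w.copy rfl this).length := dist_le _
    _ = (v - u).val := by simpa using hw
  have h2 : (cycleGraph n).dist u v ≤ (u - v).val := by
    rw [SimpleGraph.dist_comm]
    obtain ⟨w, hw⟩ := cyc_walk n hn v (u - v).val
    have : v + (((u - v).val : ℕ) : Fin n) = u := by
      rw [Fin.cast_val_eq_self]; ring
    calc (cycleGraph n).dist v u ≤ (w.copy rfl this).length := dist_le _
    _ = (u - v).val := by simpa using hw
  omega

lemma cyc_conn (n : ℕ) [NeZero n] (hn : 2 ≤ n) : (cycleGraph n).Connected := by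
  refine ⟨fun u v => ?_⟩
  obtain ⟨w, _⟩ := cyc_walk n hn u (v - u).val
  have : u + (((v - u).val : ℕ) : Fin n) = v := by rw [Fin.cast_val_eq_self]; ring
  exact ⟨w.copy rfl this⟩

lemma key_min (n : ℕ) [NeZero n] (hn : 2 ≤ n) (x : Fin n) :
    min ((x + 1 : Fin n)).val ((-(x + 1) : Fin n)).val ≤ min x.val ((-x : Fin n)).val + 1 := by
  have hx : x.val < n := x.isLt
  have e1 : ((x + 1 : Fin n)).val = (x.val + 1) % n := by
    rw [Fin.add_def, fin_one_val n hn]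
  have e2 : ((-(x + 1) : Fin n)).val = (n - (x.val + 1) % n) % n := by
    rw [show ((-(x + 1) : Fin n)).val = (n - ((x+1 : Fin n)).val) % n from rfl, e1]
  have e3 : ((-x : Fin n)).val = (n - x.val) % n := rfl
  rw [e1, e2, e3]
  rcases Nat.lt_or_ge (x.val + 1) n with h | h
  · rw [Nat.mod_eq_of_lt h, Nat.mod_eq_of_lt (by omega : n - (x.val + 1) < n)]
    rcases Nat.eq_zero_or_pos x.val with h0 | h0
    · have hz : (n - x.val) % n = 0 := by simp [h0]
      rw [hz]; omega
    · rw [Nat.mod_eq_of_lt (by omega : n - x.val < n)]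
      omega
  · have : x.val + 1 = n := by omega
    rw [this]
    simp

lemma key_min' (n : ℕ) [NeZero n] (hn : 2 ≤ n) (x : Fin n) :
    min ((x - 1 : Fin n)).val ((-(x - 1) : Fin n)).val ≤ min x.val ((-x : Fin n)).val + 1 := by
  have := key_min n hn (-x)
  rw [show (-x + 1 : Fin n) = -(x - 1) by ring, show (-(-(x-1)) : Fin n) = x - 1 by ring,
    neg_neg] at this
  omega

lemma cyc_walk_ge (n : ℕ) [NeZero n] (hn : 2 ≤ n) {u v : Fin n}
    (w : (cycleGraph n).Walk u v) : min (v - u).val (u - v).val ≤ w.length := by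
  induction w with
  | nil => simp
  | @cons a m b h p ih =>
    rw [cycleGraph_adj'] at h
    have hone : ∀ y : Fin n, y.val = 1 → y = 1 := by
      intro y hy
      have := fin_one_val n hn
      exact Fin.ext (by omega)
    rw [Walk.length_cons]
    rcases h with h | h
    · -- a - m = 1, so a = m + 1
      have ha : a = m + 1 := by have := hone _ h; rw [← this]; ring
      have e1 : b - a = (b - m) - 1 := by rw [ha]; ring
      have e2 : a - b = -((b - m) - 1) := by rw [ha]; ring
      rw [e1, e2]
      have := key_min' n hn (b - m)
      have hm : (m - b) = -(b - m) := by ring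
      rw [hm] at ih
      omega
    · -- m - a = 1, so a = m - 1
      have ha : a = m - 1 := by have := hone _ h; rw [← this]; ring
      have e1 : b - a = (b - m) + 1 := by rw [ha]; ring
      have e2 : a - b = -((b - m) + 1) := by rw [ha]; ring
      rw [e1, e2]
      have := key_min n hn (b - m)
      have hm : (m - b) = -(b - m) := by ring
      rw [hm] at ih
      omega

lemma cyc_dist (n : ℕ) [NeZero n] (hn : 2 ≤ n) (u v : Fin n) :
    (cycleGraph n).dist u v = min (v - u).val (u - v).val := by
  refine le_antisymm (cyc_dist_le n hn u v) ?_
  obtain ⟨w, hw⟩ := ((cyc_conn n hn) u v).exists_walk_length_eq_dist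
  rw [← hw]
  exact cyc_walk_ge n hn w

lemma box_walk_ge {α β : Type*} {G : SimpleGraph α} {H : SimpleGraph β}
    (hG : G.Connected) (hH : H.Connected) {x y : α × β} (w : (G □ H).Walk x y) :
    G.dist x.1 y.1 + H.dist x.2 y.2 ≤ w.length := by
  induction w with
  | nil => simp
  | @cons a m b h p ih =>
    rw [Walk.length_cons]
    rcases h with ⟨hadj, he⟩ | ⟨hadj, he⟩
    · have h1 : G.dist a.1 b.1 ≤ 1 + G.dist m.1 b.1 := by
        calc G.dist a.1 b.1 ≤ G.dist a.1 m.1 + G.dist m.1 b.1 := hG.dist_triangle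
        _ ≤ 1 + G.dist m.1 b.1 := by
            have : G.dist a.1 m.1 ≤ 1 := by simpa using dist_le hadj.toWalk
            omega
      have h2 : H.dist a.2 b.2 = H.dist m.2 b.2 := by rw [he]
      omega
    · have h1 : H.dist a.2 b.2 ≤ 1 + H.dist m.2 b.2 := by
        calc H.dist a.2 b.2 ≤ H.dist a.2 m.2 + H.dist m.2 b.2 := hH.dist_triangle
        _ ≤ 1 + H.dist m.2 b.2 := by
            have : H.dist a.2 m.2 ≤ 1 := by simpa using dist_le hadj.toWalk
            omega
      have h2 : G.dist a.1 b.1 = G.dist m.1 b.1 := by rw [he]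
      omega

lemma box_dist {α β : Type*} {G : SimpleGraph α} {H : SimpleGraph β}
    (hG : G.Connected) (hH : H.Connected) (x y : α × β) :
    (G □ H).dist x y = G.dist x.1 y.1 + H.dist x.2 y.2 := by
  refine le_antisymm ?_ ?_
  · obtain ⟨p, hp⟩ := (hG x.1 y.1).exists_walk_length_eq_dist
    obtain ⟨q, hq⟩ := (hH x.2 y.2).exists_walk_length_eq_dist
    set W : (G □ H).Walk x y :=
      ((p.boxProdLeft H x.2).append (q.boxProdRight G y.1)).copy
        (Prod.ext rfl rfl) (Prod.ext rfl rfl) with hW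
    calc (G □ H).dist x y ≤ W.length := dist_le _
    _ = p.length + q.length := by
        rw [hW, Walk.length_copy, Walk.length_append]
        exact congrArg₂ (· + ·) (Walk.length_map _ _) (Walk.length_map _ _)
    _ = _ := by rw [hp, hq]
  · obtain ⟨w, hw⟩ := ((hG.boxProd hH) x y).exists_walk_length_eq_dist
    rw [← hw]
    exact box_walk_ge hG hH w


lemma cycle_midpoint (n : ℕ) [NeZero n] (hn : 3 ≤ n) (hodd : Odd n) (a b : Fin n) :
    ∃ c, (cycleGraph n).dist a c = (cycleGraph n).dist b c := by
  have hn2 : 2 ≤ n := by omega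
  have hneg : ∀ y : Fin n, (-y).val = (n - y.val) % n := fun _ => rfl
  have hv : ∀ j : ℕ, j < n → ((j : Fin n)).val = j := fun j hj => Fin.val_cast_of_lt hj
  by_cases hab : a = b
  · exact ⟨a, by rw [hab]⟩
  set k := (b - a).val with hkdef
  have hk : k < n := (b - a).isLt
  have hk0 : k ≠ 0 := by
    intro h
    apply hab
    have h1 : b - a = 0 := Fin.ext (by rw [Fin.val_zero]; exact h)
    have := sub_eq_zero.mp h1
    exact this.symm
  have hba : b - a = ((k : ℕ) : Fin n) := (Fin.cast_val_eq_self _).symm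
  obtain ⟨s, hs⟩ := hodd
  rcases Nat.even_or_odd k with ⟨t, ht⟩ | ⟨t, ht⟩
  · -- k even, midpoint inside the arc from a to b
    refine ⟨a + ((k / 2 : ℕ) : Fin n), ?_⟩
    have h2 : k / 2 < n := by omega
    have e1 : (a + ((k / 2 : ℕ) : Fin n)) - a = ((k / 2 : ℕ) : Fin n) := by ring
    have e2 : a - (a + ((k / 2 : ℕ) : Fin n)) = -((k / 2 : ℕ) : Fin n) := by ring
    have e3 : b - (a + ((k / 2 : ℕ) : Fin n)) = ((k - k / 2 : ℕ) : Fin n) := by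
      have hc : ((k - k / 2 : ℕ) : Fin n) = ((k : ℕ) : Fin n) - ((k / 2 : ℕ) : Fin n) := by
        rw [Nat.cast_sub (Nat.div_le_self k 2)]
      rw [hc, ← hba]; ring
    have e4 : (a + ((k / 2 : ℕ) : Fin n)) - b = -((k - k / 2 : ℕ) : Fin n) := by
      rw [← e3]; ring
    rw [cyc_dist n hn2, cyc_dist n hn2, e1, e2, e3, e4, hneg, hneg, hv _ h2, hv _ (by omega)]
    rw [Nat.mod_eq_of_lt (by omega), Nat.mod_eq_of_lt (by omega)]
    omega
  · -- k odd, so n - k even; midpoint inside the arc from b to a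
    have hkn : k ≤ n - 2 := by omega
    set m := (n - k) / 2 with hm
    have hm1 : 1 ≤ m := by omega
    have hmn : m < n := by omega
    have hkm : k + m < n := by omega
    refine ⟨b + ((m : ℕ) : Fin n), ?_⟩
    have e1 : (b + ((m : ℕ) : Fin n)) - b = ((m : ℕ) : Fin n) := by ring
    have e2 : b - (b + ((m : ℕ) : Fin n)) = -((m : ℕ) : Fin n) := by ring
    have e3 : (b + ((m : ℕ) : Fin n)) - a = ((k + m : ℕ) : Fin n) := by
      rw [Nat.cast_add, ← hba]; ring
    have e4 : a - (b + ((m : ℕ) : Fin n)) = -((k + m : ℕ) : Fin n) := by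
      rw [← e3]; ring
    rw [cyc_dist n hn2, cyc_dist n hn2, e3, e4, e1, e2, hneg, hneg, hv _ hmn, hv _ hkm]
    rw [Nat.mod_eq_of_lt (by omega), Nat.mod_eq_of_lt (by omega)]
    omega


lemma top_conn : (⊤ : SimpleGraph (Fin 2)).Connected := by
  refine ⟨fun u v => ?_⟩
  by_cases h : u = v
  · rw [h]
  · exact (SimpleGraph.Adj.toWalk (by exact h : (⊤ : SimpleGraph (Fin 2)).Adj u v)).reachable

theorem stmt_11 (n : ℕ) (hn : 3 ≤ n) (hodd : Odd n) :
    eqdim (cycleGraph n □ (⊤ : SimpleGraph (Fin 2))) = n := by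
  haveI : NeZero n := ⟨by omega⟩
  have hn2 : 2 ≤ n := by omega
  have hG := cyc_conn n hn2
  have hH := top_conn
  set S := {k | ∃ D : Finset (Fin n × Fin 2),
      IsDistEqSet (cycleGraph n □ (⊤ : SimpleGraph (Fin 2))) (D : Set (Fin n × Fin 2)) ∧
      D.card = k} with hS
  -- membership : n ∈ S
  have hmem : n ∈ S := by
    refine ⟨Finset.univ.image (fun a : Fin n => (a, (0 : Fin 2))), ?_, ?_⟩
    · intro x hx y hy
      have hx2 : x.2 = 1 := by
        by_contra h
        have hx0 : x.2 = 0 := by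
          have h1 : x.2.val < 2 := x.2.isLt
          have h2 : x.2.val ≠ 1 := fun hv => h (Fin.ext (show x.2.val = (1 : Fin 2).val from hv))
          exact Fin.ext (show x.2.val = 0 by omega)
        exact hx (by
          simp only [Finset.coe_image, Set.mem_image, Finset.coe_univ, Set.mem_univ,
            true_and]
          exact ⟨x.1, by rw [← hx0]⟩)
      have hy2 : y.2 = 1 := by
        by_contra h
        have hy0 : y.2 = 0 := by
          have h1 : y.2.val < 2 := y.2.isLt
          have h2 : y.2.val ≠ 1 := fun hv => h (Fin.ext (show y.2.val = (1 : Fin 2).val from hv))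
          exact Fin.ext (show y.2.val = 0 by omega)
        exact hy (by
          simp only [Finset.coe_image, Set.mem_image, Finset.coe_univ, Set.mem_univ,
            true_and]
          exact ⟨y.1, by rw [← hy0]⟩)
      obtain ⟨c, hc⟩ := cycle_midpoint n hn hodd x.1 y.1
      refine ⟨(c, 0), ?_, ?_⟩
      · simp only [Finset.coe_image, Set.mem_image, Finset.coe_univ, Set.mem_univ, true_and]
        exact ⟨c, rfl⟩
      · rw [box_dist hG hH, box_dist hG hH]
        simp only [hx2, hy2, hc]
    · rw [Finset.card_image_of_injective _ (fun a b h => congrArg Prod.fst h)]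
      simp
  -- lower bound : every k ∈ S satisfies n ≤ k
  have hlb : ∀ k ∈ S, n ≤ k := by
    rintro k ⟨D, hD, rfl⟩
    have hcol : ∀ a : Fin n, (a, (0 : Fin 2)) ∈ D ∨ (a, (1 : Fin 2)) ∈ D := by
      intro a
      by_contra h
      push_neg at h
      obtain ⟨w, hwD, heq⟩ := hD (a, 0) (by simpa using h.1) (a, 1) (by simpa using h.2)
      obtain ⟨c, j⟩ := w
      rw [box_dist hG hH, box_dist hG hH] at heq
      simp only [add_right_inj] at heq
      rw [dist_top, dist_top] at heq
      fin_cases j <;> simp_all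
    calc n = (Finset.univ : Finset (Fin n)).card := by simp
    _ ≤ D.card := by
        refine Finset.card_le_card_of_surjOn Prod.fst ?_
        intro a _
        rcases hcol a with h | h
        · exact ⟨(a, 0), h, rfl⟩
        · exact ⟨(a, 1), h, rfl⟩
  exact le_antisymm (Nat.sInf_le hmem) (le_csInf ⟨n, hmem⟩ hlb)
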